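/- Let X = (X_1, …, X_K) be a square-integrable random vector in ℝ^K with mean vector μ = (μ_1, …, μ_K). For u, v ∈ B₁⁺ define Ξ_u(v) ∈ [0, ∞] by Ξ_u(v) := max{ Var(⟨u, X⟩ − ⟨v, X⟩) / (⟨v, μ⟩ − ⟨u, μ⟩)² , 3‖u − v‖₁ / (⟨v, μ⟩ − ⟨u, μ⟩) } if ⟨v, μ⟩ > ⟨u, μ⟩, and Ξ_u(v) := +∞ otherwise. Then for every i ∈ {1, …, K} and every u, v ∈ B₁⁺ whose supports are contained in {1, …, K} \ {i}: Ξ_{e_i}(v) ≤ max{ Ξ_{e_i}(u), Ξ_u(v) }, where e_i is the i-th standard basis vector (which lies in B₁⁺). -/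

import Mathlib

open MeasureTheory ProbabilityTheory ENNReal

lemma evar_eq {Ω : Type*} [MeasurableSpace Ω] (X : Ω → ℝ) (μ : Measure Ω) :
    evariance X μ = eLpNorm (fun ω => X ω - μ[X]) 2 μ ^ 2 := by
  rw [eLpNorm_eq_lintegral_rpow_enorm_toReal two_ne_zero ENNReal.ofNat_ne_top,
    ← ENNReal.rpow_natCast, ← ENNReal.rpow_mul]
  norm_num
  rfl

lemma var_add_le {Ω : Type*} [MeasurableSpace Ω] (P : Measure Ω) [IsProbabilityMeasure P]
    (Y Z : Ω → ℝ) (hY : MemLp Y 2 P) (hZ : MemLp Z 2 P) :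
    variance (fun ω => Y ω + Z ω) P ≤
      (Real.sqrt (variance Y P) + Real.sqrt (variance Z P)) ^ 2 := by
  set f : Ω → ℝ := fun ω => Y ω - P[Y] with hfdef
  set g : Ω → ℝ := fun ω => Z ω - P[Z] with hgdef
  have hf : MemLp f 2 P := hY.sub (memLp_const _)
  have hg : MemLp g 2 P := hZ.sub (memLp_const _)
  have hint : P[fun ω => Y ω + Z ω] = P[Y] + P[Z] :=
    integral_add (hY.integrable one_le_two) (hZ.integrable one_le_two)
  have hfun : (fun ω => (Y ω + Z ω) - P[fun ω => Y ω + Z ω]) = fun ω => f ω + g ω := by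
    funext ω; rw [hint]; simp [f, g]; ring
  have hsq : ∀ (W : Ω → ℝ) (hW : MemLp W 2 P),
      Real.sqrt (variance W P) = (eLpNorm (fun ω => W ω - P[W]) 2 P).toReal := by
    intro W hW
    rw [variance, evar_eq, ENNReal.toReal_pow, Real.sqrt_sq ENNReal.toReal_nonneg]
  have h1 : eLpNorm (fun ω => f ω + g ω) 2 P ≤ eLpNorm f 2 P + eLpNorm g 2 P :=
    eLpNorm_add_le hf.aestronglyMeasurable hg.aestronglyMeasurable one_le_two
  have hne : eLpNorm f 2 P + eLpNorm g 2 P ≠ ⊤ :=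
    (ENNReal.add_lt_top.2 ⟨hf.eLpNorm_lt_top, hg.eLpNorm_lt_top⟩).ne
  calc variance (fun ω => Y ω + Z ω) P
      = (eLpNorm (fun ω => f ω + g ω) 2 P).toReal ^ 2 := by
        rw [variance, evar_eq, hfun, ENNReal.toReal_pow]
    _ ≤ ((eLpNorm f 2 P + eLpNorm g 2 P).toReal) ^ 2 := by
        gcongr
    _ = ((eLpNorm f 2 P).toReal + (eLpNorm g 2 P).toReal) ^ 2 := by
        rw [ENNReal.toReal_add hf.eLpNorm_lt_top.ne hg.eLpNorm_lt_top.ne]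
    _ = (Real.sqrt (variance Y P) + Real.sqrt (variance Z P)) ^ 2 := by
        rw [hsq Y hY, hsq Z hZ]

lemma ratio_max {V1 V2 V3 s t : ℝ} (hs : 0 < s) (ht : 0 < t) (h2 : 0 ≤ V2) (h3 : 0 ≤ V3)
    (h : V1 ≤ (Real.sqrt V2 + Real.sqrt V3) ^ 2) :
    V1 / (s + t) ^ 2 ≤ max (V2 / s ^ 2) (V3 / t ^ 2) := by
  set x := Real.sqrt V2 with hxdef
  set y := Real.sqrt V3 with hydef
  have hx : x ^ 2 = V2 := Real.sq_sqrt h2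
  have hy : y ^ 2 = V3 := Real.sq_sqrt h3
  have hx0 : 0 ≤ x := Real.sqrt_nonneg _
  have hy0 : 0 ≤ y := Real.sqrt_nonneg _
  rcases le_total (x * t) (y * s) with hc | hc
  · refine le_max_of_le_right ?_
    rw [div_le_div_iff₀ (by positivity) (by positivity), ← hy]
    have h1 : (x + y) * t ≤ y * (s + t) := by nlinarith
    have h2' : ((x + y) * t) ^ 2 ≤ (y * (s + t)) ^ 2 := pow_le_pow_left₀ (by positivity) h1 2
    nlinarith [mul_le_mul_of_nonneg_right h (sq_nonneg t)]
  · refine le_max_of_le_left ?_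
    rw [div_le_div_iff₀ (by positivity) (by positivity), ← hx]
    have h1 : (x + y) * s ≤ x * (s + t) := by nlinarith
    have h2' : ((x + y) * s) ^ 2 ≤ (x * (s + t)) ^ 2 := pow_le_pow_left₀ (by positivity) h1 2
    nlinarith [mul_le_mul_of_nonneg_right h (sq_nonneg s)]

/-- Ultra-metric type property of the quantities `Ξ_u(v)` for comparisons with
convex combinations of the arms: for `u, v` in the probability simplex supported
away from `i`, `Ξ_{e_i}(v) ≤ max (Ξ_{e_i}(u)) (Ξ_u(v))`. -/
theorem ultrametric_Xi {Ω : Type*} [MeasurableSpace Ω]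
    (P : Measure Ω) [IsProbabilityMeasure P] (K : ℕ)
    (X : Fin K → Ω → ℝ) (hX : ∀ i, MemLp (X i) 2 P)
    (μ : Fin K → ℝ) (hμ : ∀ i, μ i = ∫ ω, X i ω ∂P)
    (Ξ : (Fin K → ℝ) → (Fin K → ℝ) → ℝ≥0∞)
    (hΞ : ∀ u v : Fin K → ℝ, Ξ u v =
      if (∑ l, u l * μ l) < (∑ l, v l * μ l) then
        ENNReal.ofReal (max
          (variance (fun ω => (∑ l, u l * X l ω) - (∑ l, v l * X l ω)) P /
            ((∑ l, v l * μ l) - (∑ l, u l * μ l)) ^ 2)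
          (3 * (∑ l, |u l - v l|) / ((∑ l, v l * μ l) - (∑ l, u l * μ l))))
      else ⊤)
    (i : Fin K) (u v : Fin K → ℝ)
    (hu_nonneg : ∀ l, 0 ≤ u l) (hu_sum : ∑ l, u l = 1)
    (hv_nonneg : ∀ l, 0 ≤ v l) (hv_sum : ∑ l, v l = 1)
    (hu_supp : u i = 0) (hv_supp : v i = 0) :
    Ξ (Pi.single i 1) v ≤ max (Ξ (Pi.single i 1) u) (Ξ u v) := by
  set e : Fin K → ℝ := Pi.single i 1 with he
  rw [hΞ, hΞ, hΞ]
  set a := ∑ l, e l * μ l with ha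
  set b := ∑ l, u l * μ l with hb
  set c := ∑ l, v l * μ l with hc
  by_cases hab : a < b
  · by_cases hbc : b < c
    · have hac : a < c := hab.trans hbc
      rw [if_pos hac, if_pos hab, if_pos hbc]
      -- abbreviations for the three variances
      set Y2 : Ω → ℝ := fun ω => (∑ l, e l * X l ω) - (∑ l, u l * X l ω) with hY2
      set Y3 : Ω → ℝ := fun ω => (∑ l, u l * X l ω) - (∑ l, v l * X l ω) with hY3
      set Y1 : Ω → ℝ := fun ω => (∑ l, e l * X l ω) - (∑ l, v l * X l ω) with hY1
      have hmem : ∀ w : Fin K → ℝ, MemLp (fun ω => ∑ l, w l * X l ω) 2 P := by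
        intro w
        exact memLp_finset_sum Finset.univ (fun l _ => (hX l).const_mul (w l))
      have hmem2 : MemLp Y2 2 P := (hmem e).sub (hmem u)
      have hmem3 : MemLp Y3 2 P := (hmem u).sub (hmem v)
      have hvar : variance Y1 P ≤
          (Real.sqrt (variance Y2 P) + Real.sqrt (variance Y3 P)) ^ 2 := by
        have := var_add_le P Y2 Y3 hmem2 hmem3
        have heq : (fun ω => Y2 ω + Y3 ω) = Y1 := by
          funext ω; simp only [hY2, hY3, hY1]; ring
        rwa [heq] at this
      -- the ℓ¹ sums both equal 2
      have habs : ∀ w : Fin K → ℝ, (∀ l, 0 ≤ w l) → (∑ l, w l) = 1 → w i = 0 →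
          (∑ l, |e l - w l|) = 2 := by
        intro w hw hws hwi
        rw [← Finset.add_sum_erase Finset.univ _ (Finset.mem_univ i)]
        have h1 : |e i - w i| = 1 := by simp [he, hwi]
        have h2 : ∑ l ∈ Finset.univ.erase i, |e l - w l| =
            ∑ l ∈ Finset.univ.erase i, w l := by
          refine Finset.sum_congr rfl fun l hl => ?_
          have hli : l ≠ i := Finset.ne_of_mem_erase hl
          simp [he, Pi.single_apply, hli, abs_of_nonneg (hw l)]
        rw [h1, h2, Finset.sum_erase_eq_sub (Finset.mem_univ i), hws, hwi]
        norm_num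
      have hEuv : (∑ l, |e l - v l|) = (∑ l, |e l - u l|) := by
        rw [habs v hv_nonneg hv_sum hv_supp, habs u hu_nonneg hu_sum hu_supp]
      -- real inequality
      have hs : 0 < b - a := sub_pos.2 hab
      have ht : 0 < c - b := sub_pos.2 hbc
      have hst : c - a = (b - a) + (c - b) := by ring
      have hA : variance Y1 P / (c - a) ^ 2 ≤
          max (variance Y2 P / (b - a) ^ 2) (variance Y3 P / (c - b) ^ 2) := by
        rw [hst]
        exact ratio_max hs ht (variance_nonneg _ _) (variance_nonneg _ _) hvar
      have hB : 3 * (∑ l, |e l - v l|) / (c - a) ≤ 3 * (∑ l, |e l - u l|) / (b - a) := by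
        rw [hEuv]
        have hnum : 0 ≤ 3 * (∑ l, |e l - u l|) := by positivity
        gcongr
        all_goals linarith
      have hreal : max (variance Y1 P / (c - a) ^ 2) (3 * (∑ l, |e l - v l|) / (c - a)) ≤
          max (max (variance Y2 P / (b - a) ^ 2) (3 * (∑ l, |e l - u l|) / (b - a)))
              (max (variance Y3 P / (c - b) ^ 2) (3 * (∑ l, |u l - v l|) / (c - b))) := by
        refine max_le ?_ ?_
        · rcases le_max_iff.1 hA with h | h
          · exact le_max_of_le_left (le_max_of_le_left h)
          · exact le_max_of_le_right (le_max_of_le_left h)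
        · exact le_max_of_le_left (le_max_of_le_right hB)
      have hmono : Monotone ENNReal.ofReal := fun _ _ h => ENNReal.ofReal_le_ofReal h
      calc ENNReal.ofReal
            (max (variance Y1 P / (c - a) ^ 2) (3 * (∑ l, |e l - v l|) / (c - a)))
          ≤ ENNReal.ofReal
            (max (max (variance Y2 P / (b - a) ^ 2) (3 * (∑ l, |e l - u l|) / (b - a)))
              (max (variance Y3 P / (c - b) ^ 2) (3 * (∑ l, |u l - v l|) / (c - b)))) :=
            ENNReal.ofReal_le_ofReal hreal
        _ = _ := hmono.map_max
    · rw [if_neg hbc]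
      simp
  · rw [if_neg hab]
    simp
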